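/- arXiv:math/0608123 — 2 statements merged into one kernel-verified Lean document; each statement's English description precedes it below -/
import Mathlib

section
/- Let E be a full heap over A, where P is finite and A is of affine type. Then for every w in W and all proper ideals F, F' of E, the pair (F, F') is skew if and only if the pair (w · F, w · F') is skew. -/
/-- Two vertices of the Dynkin diagram are adjacent if they are distinct
and the corresponding entry of the generalized Cartan matrix is nonzero. -/
def Adj {P : Type*} (A : P → P → ℤ) (p q : P) : Prop := p ≠ q ∧ A p q ≠ 0

/-- A generalized Cartan matrix with all entries in {2, 0, -1, -2}. -/
def IsGCM {P : Type*} (A : P → P → ℤ) : Prop :=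
  (∀ p, A p p = 2) ∧ (∀ p q, p ≠ q → A p q ≤ 0) ∧
  (∀ p q, (A p q = 0 ↔ A q p = 0)) ∧
  (∀ p q, A p q = 2 ∨ A p q = 0 ∨ A p q = -1 ∨ A p q = -2)

/-- An ideal (downward-closed subset) of a partially ordered set. -/
def IsIdeal {E : Type*} [PartialOrder E] (F : Set E) : Prop :=
  ∀ ⦃x : E⦄, x ∈ F → ∀ ⦃y : E⦄, y ≤ x → y ∈ F

/-- A proper ideal: an ideal meeting each fibre `eps ⁻¹ {p}` in a nonempty
proper subset. -/
def IsProperIdeal {P E : Type*} [PartialOrder E] (eps : E → P) (F : Set E) : Prop :=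
  IsIdeal F ∧ ∀ p : P, (∃ a, eps a = p ∧ a ∈ F) ∧ (∃ a, eps a = p ∧ a ∉ F)

/-- A full heap over the generalized Cartan matrix `A` with labelling map `eps`.
Local finiteness is expressed by the `LocallyFiniteOrder` instance. -/
structure IsFullHeap {P E : Type*} [PartialOrder E] [LocallyFiniteOrder E]
    (A : P → P → ℤ) (eps : E → P) : Prop where
  /-- elements with equal or adjacent labels are comparable -/
  comparable : ∀ a b : E, (eps a = eps b ∨ Adj A (eps a) (eps b)) → a ≤ b ∨ b ≤ a
  /-- the order is the reflexive-transitive closure of its restriction to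
  pairs with equal or adjacent labels -/
  le_generated : ∀ a b : E, a ≤ b ↔
    Relation.ReflTransGen (fun x y : E => x ≤ y ∧ (eps x = eps y ∨ Adj A (eps x) (eps y))) a b
  /-- each fibre is unbounded above in E -/
  unbounded_above : ∀ (p : P) (a : E), ∃ b, eps b = p ∧ ¬ b ≤ a
  /-- each fibre is unbounded below in E -/
  unbounded_below : ∀ (p : P) (a : E), ∃ b, eps b = p ∧ ¬ a ≤ b
  /-- covering elements with adjacent labels exist -/
  covers : ∀ p p' : P, Adj A p p' → ∀ a : E, eps a = p →
    ∃ b, eps b = p' ∧ (a ⋖ b ∨ b ⋖ a)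
  /-- the defining condition on open intervals between consecutive elements
  of a fibre -/
  interval : ∀ a b : E, a < b → eps a = eps b →
    (∀ c, a < c → c < b → eps c ≠ eps a) →
    (∑ c ∈ Finset.Ioo a b, A (eps a) (eps c)) = -2

/-- The character of a pair of proper ideals:
`chi(F, F')(p) = |(F' \ F) ∩ eps⁻¹(p)| - |(F \ F') ∩ eps⁻¹(p)|`. -/
noncomputable def chiFn {P E : Type*} (eps : E → P) (F F' : Set E) : P → ℤ :=
  fun p => (((F' \ F) ∩ eps ⁻¹' {p}).ncard : ℤ) - (((F \ F') ∩ eps ⁻¹' {p}).ncard : ℤ)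

open Classical in
/-- The operator `S_p` on ideals: remove the (unique) element of label `p`
that can be removed, else add the (unique) element of label `p` that can be
added, else do nothing. -/
noncomputable def Sact {P E : Type*} [PartialOrder E] (eps : E → P) (p : P) (I : Set E) :
    Set E :=
  if h : ∃ a, a ∈ I ∧ eps a = p ∧ IsIdeal (I \ {a}) then I \ {h.choose}
  else if h' : ∃ a, a ∉ I ∧ eps a = p ∧ IsIdeal (I ∪ {a}) then I ∪ {h'.choose}
  else I

/-- The defining relations of the Weyl group of a (doubly laced)
generalized Cartan matrix. -/
def weylRels {P : Type*} (A : P → P → ℤ) : Set (FreeGroup P) :=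
  {r | (∃ p, r = FreeGroup.of p ^ 2) ∨
       (∃ p q, A p q = 0 ∧ r = (FreeGroup.of p * FreeGroup.of q) ^ 2) ∨
       (∃ p q, A p q * A q p = 1 ∧ r = (FreeGroup.of p * FreeGroup.of q) ^ 3) ∨
       (∃ p q, A p q * A q p = 2 ∧ r = (FreeGroup.of p * FreeGroup.of q) ^ 4)}

/-- The Weyl group of a generalized Cartan matrix, as a presented group. -/
abbrev WeylGroup {P : Type*} (A : P → P → ℤ) := PresentedGroup (weylRels A)

/-- The reflection `s_p` in the reflection representation on `ℤ^P`:
`s_p(v) = v - (∑ q, a_{pq} v_q) e_p`. -/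
def reflAct {P : Type*} [Fintype P] [DecidableEq P] (A : P → P → ℤ) (p : P) (v : P → ℤ) :
    P → ℤ :=
  fun r => if r = p then v p - ∑ q, A p q * v q else v r

/-- `A` is of affine type: indecomposable, and `A δ = 0` for some positive
integer vector `δ`. -/
def IsAffine {P : Type*} [Fintype P] (A : P → P → ℤ) : Prop :=
  (∀ p q : P, Relation.ReflTransGen (Adj A) p q) ∧
  ∃ δ : P → ℤ, (∀ p, 0 < δ p) ∧ ∀ p, (∑ q, A p q * δ q) = 0

section Chunk1
variable {P E : Type*} [PartialOrder E] [LocallyFiniteOrder E] {A : P → P → ℤ} {eps : E → P}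

lemma IsGCM.adjSymm (hA : IsGCM A) {p q : P} (h : Adj A p q) : Adj A q p :=
  ⟨h.1.symm, fun h0 => h.2 ((hA.2.2.1 p q).mpr h0)⟩

namespace IsFullHeap

lemma rtg_le {a b : E}
    (h : Relation.ReflTransGen
      (fun x y : E => x ≤ y ∧ (eps x = eps y ∨ Adj A (eps x) (eps y))) a b) :
    a ≤ b := by
  induction h with
  | refl => exact le_refl _
  | tail _ hbc ih => exact ih.trans hbc.1

lemma cover_adj (hE : IsFullHeap A eps) {a b : E} (hab : a < b)
    (hIoo : ∀ c, a < c → c < b → False) :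
    eps a = eps b ∨ Adj A (eps a) (eps b) := by
  have h := (hE.le_generated a b).mp hab.le
  revert hIoo
  induction h with
  | refl => exact fun _ => absurd rfl hab.ne
  | @tail c d hac hcd ih =>
    intro hIoo
    rcases eq_or_ne c a with rfl | hca
    · exact hcd.2
    · have hac' : a < c := lt_of_le_of_ne (rtg_le hac) (Ne.symm hca)
      rcases eq_or_ne c d with rfl | hcd'
      · exact ih hac' (fun z hz1 hz2 => hIoo z hz1 hz2)
      · exact absurd trivial (fun _ => hIoo c hac' (lt_of_le_of_ne hcd.1 hcd'))

lemma exists_fiber_max (hE : IsFullHeap A eps) {F : Set E} (hF : IsProperIdeal eps F)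
    (p : P) : ∃ m, eps m = p ∧ m ∈ F ∧ ∀ b, eps b = p → b ∈ F → b ≤ m := by
  obtain ⟨γ, hγp, hγF⟩ := (hF.2 p).1
  obtain ⟨δ, hδp, hδF⟩ := (hF.2 p).2
  have hle : ∀ b, eps b = p → b ∈ F → b ≤ δ := by
    intro b hb hbF
    rcases hE.comparable b δ (Or.inl (by rw [hb, hδp])) with h | h
    · exact h
    · exact absurd (hF.1 hbF h) hδF
  have hTfin : (Set.Icc γ δ ∩ F ∩ eps ⁻¹' {p}).Finite :=
    (Set.finite_Icc γ δ).subset (by intro x hx; exact hx.1.1)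
  have hTne : (Set.Icc γ δ ∩ F ∩ eps ⁻¹' {p}).Nonempty :=
    ⟨γ, ⟨⟨le_refl _, hle γ hγp hγF⟩, hγF⟩, hγp⟩
  obtain ⟨m, hmT, hmax⟩ := Set.Finite.exists_maximalFor id _ hTfin hTne
  refine ⟨m, hmT.2, hmT.1.2, ?_⟩
  intro b hb hbF
  rcases hE.comparable b m (Or.inl (by rw [hb]; exact hmT.2.symm)) with h | h
  · exact h
  · have hbT : b ∈ Set.Icc γ δ ∩ F ∩ eps ⁻¹' {p} :=
      ⟨⟨⟨hmT.1.1.1.trans h, hle b hb hbF⟩, hbF⟩, hb⟩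
    exact (hmax hbT h).ge

lemma exists_fiber_succ (hE : IsFullHeap A eps) (p : P) (a : E) (ha : eps a = p) :
    ∃ b, eps b = p ∧ a < b ∧ ∀ c, eps c = p → a < c → b ≤ c := by
  obtain ⟨b0, hb0p, hb0⟩ := hE.unbounded_above p a
  have hab0 : a < b0 := by
    rcases hE.comparable a b0 (Or.inl (by rw [ha, hb0p])) with h | h
    · exact lt_of_le_of_ne h (fun he => hb0 he.ge)
    · exact absurd h hb0
  have hfin : (Set.Ioc a b0 ∩ eps ⁻¹' {p}).Finite :=
    (Set.finite_Ioc a b0).subset fun x hx => hx.1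
  have hne : (Set.Ioc a b0 ∩ eps ⁻¹' {p}).Nonempty := ⟨b0, ⟨hab0, le_refl _⟩, hb0p⟩
  obtain ⟨m, hmT, hmin⟩ := Set.Finite.exists_minimalFor id _ hfin hne
  refine ⟨m, hmT.2, hmT.1.1, ?_⟩
  intro c hc hac
  rcases hE.comparable m c (Or.inl (by rw [hc]; exact hmT.2)) with h | h
  · exact h
  · exact hmin ⟨⟨hac, h.trans hmT.1.2⟩, hc⟩ h

end IsFullHeap
end Chunk1
set_option linter.unusedSectionVars false
section Chunk2
variable {P E : Type*} [PartialOrder E] [LocallyFiniteOrder E] {A : P → P → ℤ} {eps : E → P}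
variable {F : Set E} {p : P} {α0 α1 : E}

namespace IsFullHeap

/-- bundled context: `α0` is the maximum of `F` in fibre `p`, `α1` its successor. -/
structure Ctx (A : P → P → ℤ) (eps : E → P) (F : Set E) (p : P) (α0 α1 : E) : Prop where
  hF : IsProperIdeal eps F
  h0p : eps α0 = p
  h0F : α0 ∈ F
  hmax : ∀ b, eps b = p → b ∈ F → b ≤ α0
  h1p : eps α1 = p
  h01 : α0 < α1
  hsucc : ∀ c, eps c = p → α0 < c → α1 ≤ c

lemma exists_ctx (hE : IsFullHeap A eps) (hF : IsProperIdeal eps F) (p : P) :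
    ∃ α0 α1, Ctx A eps F p α0 α1 := by
  obtain ⟨m, h1, h2, h3⟩ := hE.exists_fiber_max hF p
  obtain ⟨b, hb1, hb2, hb3⟩ := hE.exists_fiber_succ p m h1
  exact ⟨m, b, ⟨hF, h1, h2, h3, hb1, hb2, hb3⟩⟩

namespace Ctx

variable (hc : Ctx A eps F p α0 α1)
include hc

lemma h1F : α1 ∉ F := fun h => absurd (hc.hmax α1 hc.h1p h) hc.h01.not_ge

lemma no_p_between : ∀ c, α0 < c → c < α1 → eps c ≠ p := by
  intro c h1 h2 hcp
  exact absurd (hc.hsucc c hcp h1) h2.not_ge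

lemma Ioo_fiber_empty : Set.Ioo α0 α1 ∩ eps ⁻¹' {p} = ∅ := by
  ext c
  simp only [Set.mem_inter_iff, Set.mem_Ioo, Set.mem_preimage, Set.mem_singleton_iff,
    Set.mem_empty_iff_false, iff_false, not_and]
  intro h hcp
  exact hc.no_p_between c h.1 h.2 hcp

/-- a fibre element in `F` is `≤ α0` ; outside `F` it is `> α0`. -/
lemma gt_of_notmem {x : E} (hE : IsFullHeap A eps) (hxp : eps x = p) (hx : x ∉ F) :
    α0 < x := by
  rcases hE.comparable α0 x (Or.inl (by rw [hc.h0p, hxp])) with h | h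
  · exact lt_of_le_of_ne h (fun he => hx (he ▸ hc.h0F))
  · exact absurd (hc.hF.1 hc.h0F h) hx

/-- if `x ∈ F` is above `α0`, there is an adjacent-label element of `F`
strictly between `α0` and `α1`. -/
lemma exists_adj_mem (hE : IsFullHeap A eps) {x : E} (hx : x ∈ F) (hgt : α0 < x) :
    ∃ y, y ∈ Set.Ioo α0 α1 ∧ y ∈ F ∧ Adj A p (eps y) := by
  have hfin : (Set.Ioc α0 x ∩ F).Finite := (Set.finite_Ioc α0 x).subset fun z hz => hz.1
  have hne : (Set.Ioc α0 x ∩ F).Nonempty := ⟨x, ⟨hgt, le_refl _⟩, hx⟩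
  obtain ⟨y, hyT, hmin⟩ := Set.Finite.exists_minimalFor id _ hfin hne
  have hay : α0 < y := hyT.1.1
  have hyF : y ∈ F := hyT.2
  have hcov : ∀ c, α0 < c → c < y → False := by
    intro z h1 h2
    have hzF : z ∈ F := hc.hF.1 hyF h2.le
    have : z ∈ Set.Ioc α0 x ∩ F := ⟨⟨h1, h2.le.trans hyT.1.2⟩, hzF⟩
    exact absurd (hmin this h2.le) h2.not_ge
  rcases hE.cover_adj hay hcov with heq | hadj
  · rw [hc.h0p] at heq
    exact absurd (hc.hF.1 hyF (hc.hsucc y heq.symm hay)) hc.h1F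
  · rw [hc.h0p] at hadj
    have hcomp : α1 ≤ y ∨ y ≤ α1 :=
      hE.comparable α1 y (Or.inr (by rw [hc.h1p]; exact hadj))
    rcases hcomp with h | h
    · exact absurd (hc.hF.1 hyF h) hc.h1F
    · exact ⟨y, ⟨hay, lt_of_le_of_ne h (fun he => hadj.1 (he ▸ hc.h1p).symm)⟩, hyF, hadj⟩

/-- if `x ∉ F` is below `α1`, there is an adjacent-label element outside `F`
strictly between `α0` and `α1`. -/
lemma exists_adj_notmem (hA : IsGCM A) (hE : IsFullHeap A eps) {x : E}
    (hx : x ∉ F) (hlt : x < α1) :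
    ∃ y, y ∈ Set.Ioo α0 α1 ∧ y ∉ F ∧ Adj A p (eps y) := by
  have hfin : (Set.Ico x α1 \ F).Finite := (Set.finite_Ico x α1).subset fun z hz => hz.1
  have hne : (Set.Ico x α1 \ F).Nonempty := ⟨x, ⟨le_refl _, hlt⟩, hx⟩
  obtain ⟨y, hyT, hmaxl⟩ := Set.Finite.exists_maximalFor id _ hfin hne
  have hy1 : y < α1 := hyT.1.2
  have hyF : y ∉ F := hyT.2
  have hcov : ∀ c, y < c → c < α1 → False := by
    intro z h1 h2
    by_cases hzF : z ∈ F
    · exact hyF (hc.hF.1 hzF h1.le)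
    · have : z ∈ Set.Ico x α1 \ F := ⟨⟨hyT.1.1.trans h1.le, h2⟩, hzF⟩
      exact absurd (hmaxl this h1.le) h1.not_ge
  have hy0 : α0 < y := by
    rcases hE.cover_adj hy1 hcov with heq | hadj
    · -- eps y = p : then y ≤ α0 would put y ∈ F; y > α0 gives α1 ≤ y, contra
      rw [hc.h1p] at heq
      rcases hE.comparable α0 y (Or.inl (by rw [hc.h0p, heq])) with h | h
      · rcases lt_or_eq_of_le h with h' | h'
        · exact absurd (hc.hsucc y heq h') hy1.not_ge
        · exact absurd (h' ▸ hc.h0F) hyF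
      · exact absurd (hc.hF.1 hc.h0F h) hyF
    · -- adjacent labels
      rw [hc.h1p] at hadj
      have hadj' : Adj A p (eps y) := hA.adjSymm hadj
      rcases hE.comparable α0 y (Or.inr (by rw [hc.h0p]; exact hadj')) with h | h
      · exact lt_of_le_of_ne h (fun he => hadj'.1 (he ▸ hc.h0p).symm)
      · exact absurd (hc.hF.1 hc.h0F h) hyF
  refine ⟨y, ⟨hy0, hy1⟩, hyF, ?_⟩
  rcases hE.cover_adj hy1 hcov with heq | hadj
  · rw [hc.h1p] at heq
    exact absurd (hc.hsucc y heq hy0) hy1.not_ge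
  · rw [hc.h1p] at hadj
    exact hA.adjSymm hadj

lemma removable_iff (hE : IsFullHeap A eps) :
    (∃ a, a ∈ F ∧ eps a = p ∧ IsIdeal (F \ {a})) ↔ Set.Ioo α0 α1 ∩ F = ∅ := by
  constructor
  · rintro ⟨a, haF, hap, hid⟩
    have ha0 : a = α0 := by
      rcases lt_or_eq_of_le (hc.hmax a hap haF) with h | h
      · have : α0 ∈ F \ {a} := ⟨hc.h0F, fun he => absurd (he ▸ h) (lt_irrefl _)⟩
        exact absurd (hid this h.le) (fun hmem => hmem.2 rfl)
      · exact h
    subst ha0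
    ext y
    simp only [Set.mem_inter_iff, Set.mem_Ioo, Set.mem_empty_iff_false, iff_false, not_and]
    rintro ⟨h1, _⟩ hyF
    have : y ∈ F \ {a} := ⟨hyF, fun he => absurd (he ▸ h1) (lt_irrefl _)⟩
    exact absurd ((hid this h1.le).2 rfl) (fun h => h)
  · intro hemp
    refine ⟨α0, hc.h0F, hc.h0p, ?_⟩
    rintro x ⟨hxF, hxne⟩ y hyx
    refine ⟨hc.hF.1 hxF hyx, ?_⟩
    intro hy0
    rw [Set.mem_singleton_iff] at hy0
    rw [hy0] at hyx
    have hx0 : α0 < x := lt_of_le_of_ne hyx (fun he => hxne (Set.mem_singleton_iff.mpr he.symm))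
    obtain ⟨z, hz1, hz2, _⟩ := hc.exists_adj_mem hE hxF hx0
    exact absurd (Set.eq_empty_iff_forall_notMem.mp hemp z ⟨hz1, hz2⟩) (fun h => h)

lemma addable_iff (hA : IsGCM A) (hE : IsFullHeap A eps) :
    (∃ a, a ∉ F ∧ eps a = p ∧ IsIdeal (F ∪ {a})) ↔ Set.Ioo α0 α1 ⊆ F := by
  constructor
  · rintro ⟨a, haF, hap, hid⟩
    have ha1 : a = α1 := by
      have h0a : α0 < a := hc.gt_of_notmem hE hap haF
      have h1a : α1 ≤ a := hc.hsucc a hap h0a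
      rcases lt_or_eq_of_le h1a with h | h
      · have : α1 ∈ F ∪ {a} := hid (Set.mem_union_right F rfl) h.le
        rcases this with h' | h'
        · exact absurd h' hc.h1F
        · exact absurd (Set.mem_singleton_iff.mp h' ▸ h) (lt_irrefl _)
      · exact h.symm
    intro y hy
    have : y ∈ F ∪ {a} := hid (Set.mem_union_right F rfl) (ha1 ▸ hy.2.le)
    rcases this with h' | h'
    · exact h'
    · exact absurd ((Set.mem_singleton_iff.mp h' ▸ ha1) ▸ hy.2) (lt_irrefl _)
  · intro hsub
    refine ⟨α1, hc.h1F, hc.h1p, ?_⟩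
    rintro x hx y hyx
    rcases hx with hxF | hx1
    · exact Or.inl (hc.hF.1 hxF hyx)
    · rw [Set.mem_singleton_iff] at hx1
      subst hx1
      rcases eq_or_ne y x with rfl | hne
      · exact Or.inr rfl
      · left
        by_contra hyF
        obtain ⟨z, hz1, hz2, _⟩ := hc.exists_adj_notmem hA hE hyF (lt_of_le_of_ne hyx hne)
        exact hz2 (hsub hz1)

lemma remove_witness_eq {a : E} (haF : a ∈ F) (hap : eps a = p)
    (hid : IsIdeal (F \ {a})) : a = α0 := by
  rcases lt_or_eq_of_le (hc.hmax a hap haF) with h | h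
  · have : α0 ∈ F \ {a} := ⟨hc.h0F, fun he => absurd (he ▸ h) (lt_irrefl _)⟩
    exact absurd (hid this h.le) (fun hmem => hmem.2 rfl)
  · exact h

lemma add_witness_eq (hE : IsFullHeap A eps) {a : E} (haF : a ∉ F) (hap : eps a = p)
    (hid : IsIdeal (F ∪ {a})) : a = α1 := by
  have h0a : α0 < a := hc.gt_of_notmem hE hap haF
  have h1a : α1 ≤ a := hc.hsucc a hap h0a
  rcases lt_or_eq_of_le h1a with h | h
  · have : α1 ∈ F ∪ {a} := hid (Set.mem_union_right F rfl) h.le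
    rcases this with h' | h'
    · exact absurd h' hc.h1F
    · exact absurd (Set.mem_singleton_iff.mp h' ▸ h) (lt_irrefl _)
  · exact h.symm

lemma sact_remove (hE : IsFullHeap A eps) (hemp : Set.Ioo α0 α1 ∩ F = ∅) :
    Sact eps p F = F \ {α0} := by
  have h : ∃ a, a ∈ F ∧ eps a = p ∧ IsIdeal (F \ {a}) := (hc.removable_iff hE).mpr hemp
  rw [Sact, dif_pos h]
  have hspec := h.choose_spec
  rw [hc.remove_witness_eq hspec.1 hspec.2.1 hspec.2.2]

lemma sact_add (hA : IsGCM A) (hE : IsFullHeap A eps)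
    (hne : Set.Ioo α0 α1 ∩ F ≠ ∅) (hsub : Set.Ioo α0 α1 ⊆ F) :
    Sact eps p F = F ∪ {α1} := by
  have h : ¬ ∃ a, a ∈ F ∧ eps a = p ∧ IsIdeal (F \ {a}) := by
    rw [hc.removable_iff hE]; exact hne
  have h' : ∃ a, a ∉ F ∧ eps a = p ∧ IsIdeal (F ∪ {a}) := (hc.addable_iff hA hE).mpr hsub
  rw [Sact, dif_neg h, dif_pos h']
  have hspec := h'.choose_spec
  rw [hc.add_witness_eq hE hspec.1 hspec.2.1 hspec.2.2]

lemma sact_id (hA : IsGCM A) (hE : IsFullHeap A eps)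
    (hne : Set.Ioo α0 α1 ∩ F ≠ ∅) (hsub : ¬ Set.Ioo α0 α1 ⊆ F) :
    Sact eps p F = F := by
  have h : ¬ ∃ a, a ∈ F ∧ eps a = p ∧ IsIdeal (F \ {a}) := by
    rw [hc.removable_iff hE]; exact hne
  have h' : ¬ ∃ a, a ∉ F ∧ eps a = p ∧ IsIdeal (F ∪ {a}) := by
    rw [hc.addable_iff hA hE]; exact hsub
  rw [Sact, dif_neg h, dif_neg h']

end Ctx

lemma sact_mem_of_ne {I : Set E} {x : E} {p : P} (hx : eps x ≠ p) :
    x ∈ Sact eps p I ↔ x ∈ I := by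
  rw [Sact]
  split_ifs with h h'
  · have hspec := h.choose_spec
    constructor
    · exact fun hm => hm.1
    · exact fun hm => ⟨hm, fun he => hx ((Set.mem_singleton_iff.mp he) ▸ hspec.2.1)⟩
  · have hspec := h'.choose_spec
    constructor
    · rintro (hm | hm)
      · exact hm
      · exact absurd ((Set.mem_singleton_iff.mp hm) ▸ hspec.2.1) hx
    · exact fun hm => Or.inl hm
  · exact Iff.rfl

end IsFullHeap
end Chunk2
section Chunk3
variable {P E : Type*} [PartialOrder E] [LocallyFiniteOrder E] {A : P → P → ℤ} {eps : E → P}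

lemma ncard_cast_sub {α : Type*} {s t : Set α} (hs : s.Finite) (ht : t.Finite) :
    ((s \ t).ncard : ℤ) - ((t \ s).ncard : ℤ) = (s.ncard : ℤ) - t.ncard := by
  have h1 : (s \ (s ∩ t)).ncard + (s ∩ t).ncard = s.ncard :=
    Set.ncard_diff_add_ncard_of_subset Set.inter_subset_left hs
  have h2 : (t \ (t ∩ s)).ncard + (t ∩ s).ncard = t.ncard :=
    Set.ncard_diff_add_ncard_of_subset Set.inter_subset_left ht
  rw [Set.diff_self_inter] at h1 h2
  have h3 : (s ∩ t).ncard = (t ∩ s).ncard := by rw [Set.inter_comm]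
  omega

namespace IsFullHeap

lemma interval_sum [Fintype P] [DecidableEq P] (hE : IsFullHeap A eps) {p : P} {a b : E}
    (hap : eps a = p) (hbp : eps b = p) (hab : a < b)
    (hno : ∀ c, a < c → c < b → eps c ≠ p) :
    ∑ q, A p q * ((Set.Ioo a b ∩ eps ⁻¹' {q}).ncard : ℤ) = -2 := by
  have h := hE.interval a b hab (hap.trans hbp.symm) (by rw [hap]; exact hno)
  rw [hap] at h
  rw [← h, ← Finset.sum_fiberwise (Finset.Ioo a b) eps (fun c => A p (eps c))]
  refine Finset.sum_congr rfl ?_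
  intro q _
  have hconst : ∀ c ∈ (Finset.Ioo a b).filter (fun c => eps c = q), A p (eps c) = A p q := by
    intro c hcmem; rw [(Finset.mem_filter.mp hcmem).2]
  rw [Finset.sum_congr rfl hconst, Finset.sum_const, nsmul_eq_mul]
  have hset : Set.Ioo a b ∩ eps ⁻¹' {q} =
      ↑((Finset.Ioo a b).filter (fun c => eps c = q)) := by
    ext x
    simp [Set.mem_Ioo, Finset.mem_Ioo]
  rw [hset, Set.ncard_coe_finset, mul_comm]

lemma mid_sum [Fintype P] [DecidableEq P] (hA : IsGCM A) (hE : IsFullHeap A eps) {p : P} :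
    ∀ (n : ℕ) (a b : E), (Finset.Ioo a b).card = n → eps a = p → eps b = p → a < b →
    ∑ q, A p q * ((Set.Ioo a b ∩ eps ⁻¹' {q}).ncard : ℤ) = -2 := by
  intro n
  induction n using Nat.strong_induction_on with
  | _ n ih =>
  intro a b hcard hap hbp hab
  obtain ⟨a1, ha1p, haa1, hsucc⟩ := hE.exists_fiber_succ p a hap
  have ha1b : a1 ≤ b := hsucc b hbp hab
  rcases eq_or_lt_of_le ha1b with rfl | hlt
  · exact interval_sum hE hap hbp hab (fun c h1 h2 hcp => absurd (hsucc c hcp h1) h2.not_ge)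
  · have e1 : Set.Ioo a a1 ∩ eps ⁻¹' {p} = ∅ := by
      ext c
      simp only [Set.mem_inter_iff, Set.mem_Ioo, Set.mem_preimage, Set.mem_singleton_iff,
        Set.mem_empty_iff_false, iff_false, not_and]
      rintro ⟨h1, h2⟩ hcp
      exact absurd (hsucc c hcp h1) h2.not_ge
    have hkey : ∀ q : P, A p q * ((Set.Ioo a b ∩ eps ⁻¹' {q}).ncard : ℤ) =
        A p q * ((Set.Ioo a a1 ∩ eps ⁻¹' {q}).ncard : ℤ) +
        A p q * ((Set.Ioo a1 b ∩ eps ⁻¹' {q}).ncard : ℤ) +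
        (if q = p then 2 else 0) := by
      intro q
      by_cases hq : q = p
      · subst hq
        have e2 : Set.Ioo a b ∩ eps ⁻¹' {q} = insert a1 (Set.Ioo a1 b ∩ eps ⁻¹' {q}) := by
          ext x
          simp only [Set.mem_inter_iff, Set.mem_Ioo, Set.mem_preimage, Set.mem_singleton_iff,
            Set.mem_insert_iff]
          constructor
          · rintro ⟨⟨h1, h2⟩, h3⟩
            rcases eq_or_lt_of_le (hsucc x h3 h1) with h | h
            · exact Or.inl h.symm
            · exact Or.inr ⟨⟨h, h2⟩, h3⟩
          · rintro (rfl | ⟨⟨h1, h2⟩, h3⟩)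
            · exact ⟨⟨haa1, hlt⟩, ha1p⟩
            · exact ⟨⟨haa1.trans h1, h2⟩, h3⟩
        have hnm : a1 ∉ Set.Ioo a1 b ∩ eps ⁻¹' {q} := fun h => absurd h.1.1 (lt_irrefl a1)
        have hfin : (Set.Ioo a1 b ∩ eps ⁻¹' {q}).Finite :=
          (Set.finite_Ioo a1 b).subset Set.inter_subset_left
        rw [e2, e1, Set.ncard_insert_of_notMem hnm hfin, Set.ncard_empty]
        rw [if_pos rfl, hA.1]
        push_cast
        ring
      · by_cases hq0 : A p q = 0
        · simp [hq0, hq]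
        · have hadj : Adj A p q := ⟨fun h => hq h.symm, hq0⟩
          have e3 : Set.Ioo a b ∩ eps ⁻¹' {q} =
              (Set.Ioo a a1 ∩ eps ⁻¹' {q}) ∪ (Set.Ioo a1 b ∩ eps ⁻¹' {q}) := by
            ext x
            simp only [Set.mem_inter_iff, Set.mem_Ioo, Set.mem_preimage, Set.mem_singleton_iff,
              Set.mem_union]
            constructor
            · rintro ⟨⟨h1, h2⟩, h3⟩
              have hcomp : a1 ≤ x ∨ x ≤ a1 :=
                hE.comparable a1 x (Or.inr (by rw [ha1p, h3]; exact hadj))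
              have hne : x ≠ a1 := fun h => hadj.1 (by rw [← h3, h, ha1p])
              rcases hcomp with h | h
              · exact Or.inr ⟨⟨lt_of_le_of_ne h (Ne.symm hne), h2⟩, h3⟩
              · exact Or.inl ⟨⟨h1, lt_of_le_of_ne h hne⟩, h3⟩
            · rintro (⟨⟨h1, h2⟩, h3⟩ | ⟨⟨h1, h2⟩, h3⟩)
              · exact ⟨⟨h1, h2.trans hlt⟩, h3⟩
              · exact ⟨⟨haa1.trans h1, h2⟩, h3⟩
          have hdisj : Disjoint (Set.Ioo a a1 ∩ eps ⁻¹' {q}) (Set.Ioo a1 b ∩ eps ⁻¹' {q}) := by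
            rw [Set.disjoint_left]
            rintro x ⟨⟨_, h2⟩, _⟩ ⟨⟨h3, _⟩, _⟩
            exact absurd (h2.trans h3) (lt_irrefl x)
          rw [e3, Set.ncard_union_eq hdisj ((Set.finite_Ioo a a1).subset Set.inter_subset_left)
            ((Set.finite_Ioo a1 b).subset Set.inter_subset_left), if_neg hq]
          push_cast
          ring
    have hsum := Finset.sum_congr rfl (fun q (_ : q ∈ Finset.univ) => hkey q)
    rw [hsum, Finset.sum_add_distrib, Finset.sum_add_distrib, Finset.sum_ite_eq' Finset.univ p
      (fun _ => (2 : ℤ)), if_pos (Finset.mem_univ p)]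
    have hss : Finset.Ioo a1 b ⊂ Finset.Ioo a b := by
      constructor
      · intro x hx
        rw [Finset.mem_Ioo] at hx ⊢
        exact ⟨haa1.trans hx.1, hx.2⟩
      · intro hsub
        have : a1 ∈ Finset.Ioo a b := Finset.mem_Ioo.mpr ⟨haa1, hlt⟩
        have h2 := hsub this
        rw [Finset.mem_Ioo] at h2
        exact absurd h2.1 (lt_irrefl a1)
    have hih := ih (Finset.Ioo a1 b).card (hcard ▸ Finset.card_lt_card hss) a1 b rfl ha1p hbp hlt
    have hbase := interval_sum hE hap ha1p haa1
      (fun c h1 h2 hcp => absurd (hsucc c hcp h1) h2.not_ge)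
    rw [hbase, hih]
    ring

lemma diff_fiber_finite (hE : IsFullHeap A eps) {F F' : Set E} (hF : IsProperIdeal eps F)
    (hF' : IsProperIdeal eps F') (q : P) : ((F \ F') ∩ eps ⁻¹' {q}).Finite := by
  obtain ⟨m, hm1, hm2, hm3⟩ := hE.exists_fiber_max hF q
  obtain ⟨m', hm'1, hm'2, hm'3⟩ := hE.exists_fiber_max hF' q
  refine (Set.finite_Ioc m' m).subset ?_
  rintro x ⟨⟨hxF, hxF'⟩, hxq⟩
  refine ⟨?_, hm3 x hxq hxF⟩
  rcases hE.comparable x m' (Or.inl (by rw [hxq, hm'1])) with h | h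
  · exact absurd (hF'.1 hm'2 h) hxF'
  · exact lt_of_le_of_ne h (fun he => hxF' (he ▸ hm'2))

lemma chi_swap (F F' : Set E) (q : P) : chiFn eps F F' q = -chiFn eps F' F q := by
  simp only [chiFn]
  ring

lemma chi_remove {F F' : Set E} {a : E} {q : P} (hfin1 : ((F' \ F) ∩ eps ⁻¹' {q}).Finite)
    (hfin2 : ((F \ F') ∩ eps ⁻¹' {q}).Finite) (haF : a ∈ F) (hap : eps a = q) :
    chiFn eps (F \ {a}) F' q = chiFn eps F F' q + 1 := by
  by_cases haF' : a ∈ F'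
  · have e1 : (F' \ (F \ {a})) ∩ eps ⁻¹' {q} = insert a ((F' \ F) ∩ eps ⁻¹' {q}) := by
      ext x
      simp only [Set.mem_inter_iff, Set.mem_diff, Set.mem_insert_iff, Set.mem_singleton_iff,
        Set.mem_preimage]
      constructor
      · rintro ⟨⟨hx1, hx2⟩, hx3⟩
        by_cases hxa : x = a
        · exact Or.inl hxa
        · exact Or.inr ⟨⟨hx1, fun hxF => hx2 ⟨hxF, hxa⟩⟩, hx3⟩
      · rintro (rfl | ⟨⟨hx1, hx2⟩, hx3⟩)
        · exact ⟨⟨haF', fun h => h.2 rfl⟩, hap⟩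
        · exact ⟨⟨hx1, fun h => hx2 h.1⟩, hx3⟩
    have e2 : ((F \ {a}) \ F') ∩ eps ⁻¹' {q} = (F \ F') ∩ eps ⁻¹' {q} := by
      ext x
      simp only [Set.mem_inter_iff, Set.mem_diff, Set.mem_singleton_iff, Set.mem_preimage]
      constructor
      · rintro ⟨⟨⟨hx1, _⟩, hx2⟩, hx3⟩
        exact ⟨⟨hx1, hx2⟩, hx3⟩
      · rintro ⟨⟨hx1, hx2⟩, hx3⟩
        exact ⟨⟨⟨hx1, fun h => hx2 (h ▸ haF')⟩, hx2⟩, hx3⟩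
    have hnm : a ∉ (F' \ F) ∩ eps ⁻¹' {q} := fun h => h.1.2 haF
    simp only [chiFn]
    rw [e1, e2, Set.ncard_insert_of_notMem hnm hfin1]
    push_cast
    ring
  · have e1 : (F' \ (F \ {a})) ∩ eps ⁻¹' {q} = (F' \ F) ∩ eps ⁻¹' {q} := by
      ext x
      simp only [Set.mem_inter_iff, Set.mem_diff, Set.mem_singleton_iff, Set.mem_preimage]
      constructor
      · rintro ⟨⟨hx1, hx2⟩, hx3⟩
        refine ⟨⟨hx1, fun hxF => ?_⟩, hx3⟩
        by_cases hxa : x = a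
        · exact haF' (hxa ▸ hx1)
        · exact hx2 ⟨hxF, hxa⟩
      · rintro ⟨⟨hx1, hx2⟩, hx3⟩
        exact ⟨⟨hx1, fun h => hx2 h.1⟩, hx3⟩
    have e2 : ((F \ {a}) \ F') ∩ eps ⁻¹' {q} = ((F \ F') ∩ eps ⁻¹' {q}) \ {a} := by
      ext x
      simp only [Set.mem_inter_iff, Set.mem_diff, Set.mem_singleton_iff, Set.mem_preimage]
      tauto
    have hmem : a ∈ (F \ F') ∩ eps ⁻¹' {q} := ⟨⟨haF, haF'⟩, hap⟩
    have hcd := Set.ncard_diff_singleton_add_one hmem hfin2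
    simp only [chiFn]
    rw [e1, e2]
    omega

lemma chi_add {F F' : Set E} {a : E} {q : P} (hfin1 : ((F' \ F) ∩ eps ⁻¹' {q}).Finite)
    (hfin2 : ((F \ F') ∩ eps ⁻¹' {q}).Finite) (haF : a ∉ F) (hap : eps a = q) :
    chiFn eps (F ∪ {a}) F' q = chiFn eps F F' q - 1 := by
  have hfin1' : ((F' \ (F ∪ {a})) ∩ eps ⁻¹' {q}).Finite :=
    hfin1.subset (by rintro x ⟨⟨h1, h2⟩, h3⟩; exact ⟨⟨h1, fun h => h2 (Or.inl h)⟩, h3⟩)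
  have hfin2' : (((F ∪ {a}) \ F') ∩ eps ⁻¹' {q}).Finite := by
    refine (hfin2.union (Set.finite_singleton a)).subset ?_
    rintro x ⟨⟨h1 | h1, h2⟩, h3⟩
    · exact Or.inl ⟨⟨h1, h2⟩, h3⟩
    · exact Or.inr h1
  have h := chi_remove (F := F ∪ {a}) (F' := F') (a := a) (q := q) hfin1' hfin2'
    (Set.mem_union_right F rfl) hap
  rw [Set.union_singleton, Set.insert_diff_self_of_notMem haF] at h
  rw [Set.union_singleton]
  linarith

end IsFullHeap
end Chunk3
section Chunk4
variable {P E : Type*} [PartialOrder E] [LocallyFiniteOrder E] {A : P → P → ℤ} {eps : E → P}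
variable {F : Set E} {p : P} {α0 α1 : E}

namespace IsFullHeap
namespace Ctx

variable (hc : Ctx A eps F p α0 α1)
include hc

lemma fiber_mem_iff (hE : IsFullHeap A eps) {q : P} (hadj : Adj A p q) {x : E}
    (hxq : eps x = q) : x ∈ F ↔ (x < α0 ∨ (x ∈ Set.Ioo α0 α1 ∧ x ∈ F)) := by
  constructor
  · intro hxF
    have hx1 : x < α1 := by
      rcases hE.comparable α1 x (Or.inr (by rw [hc.h1p, hxq]; exact hadj)) with h | h
      · exact absurd (hc.hF.1 hxF h) hc.h1F
      · exact lt_of_le_of_ne h (fun he => hadj.1 (by rw [← hc.h1p, ← he]; exact hxq))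
    rcases hE.comparable α0 x (Or.inr (by rw [hc.h0p, hxq]; exact hadj)) with h | h
    · exact Or.inr ⟨⟨lt_of_le_of_ne h (fun he => hadj.1 (by rw [← hc.h0p, he]; exact hxq)),
        hx1⟩, hxF⟩
    · exact Or.inl (lt_of_le_of_ne h (fun he => hadj.1 (by rw [← hc.h0p, ← he]; exact hxq)))
  · rintro (h | ⟨_, h⟩)
    · exact hc.hF.1 hc.h0F h.le
    · exact h

lemma t_p_zero : Set.Ioo α0 α1 ∩ F ∩ eps ⁻¹' {p} = ∅ := by
  have := hc.Ioo_fiber_empty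
  rw [← Set.subset_empty_iff] at this ⊢
  exact fun x hx => this ⟨hx.1.1, hx.2⟩

lemma tsum_remove [Fintype P] [DecidableEq P] (hemp : Set.Ioo α0 α1 ∩ F = ∅) :
    ∑ q, A p q * ((Set.Ioo α0 α1 ∩ F ∩ eps ⁻¹' {q}).ncard : ℤ) = 0 := by
  refine Finset.sum_eq_zero fun q _ => ?_
  have h : Set.Ioo α0 α1 ∩ F ∩ eps ⁻¹' {q} = ∅ := by rw [hemp, Set.empty_inter]
  rw [h, Set.ncard_empty]
  ring

lemma tsum_add [Fintype P] [DecidableEq P] (hE : IsFullHeap A eps)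
    (hsub : Set.Ioo α0 α1 ⊆ F) :
    ∑ q, A p q * ((Set.Ioo α0 α1 ∩ F ∩ eps ⁻¹' {q}).ncard : ℤ) = -2 := by
  have h : Set.Ioo α0 α1 ∩ F = Set.Ioo α0 α1 := Set.inter_eq_self_of_subset_left hsub
  rw [show (fun q => A p q * ((Set.Ioo α0 α1 ∩ F ∩ eps ⁻¹' {q}).ncard : ℤ)) = fun q =>
    A p q * ((Set.Ioo α0 α1 ∩ eps ⁻¹' {q}).ncard : ℤ) from funext fun q => by rw [h]]
  exact hE.interval_sum hc.h0p hc.h1p hc.h01 hc.no_p_between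

lemma tsum_id [Fintype P] [DecidableEq P] (hA : IsGCM A) (hE : IsFullHeap A eps)
    (hne : Set.Ioo α0 α1 ∩ F ≠ ∅) (hsub : ¬ Set.Ioo α0 α1 ⊆ F) :
    ∑ q, A p q * ((Set.Ioo α0 α1 ∩ F ∩ eps ⁻¹' {q}).ncard : ℤ) = -1 := by
  obtain ⟨y0, hy0⟩ := Set.nonempty_iff_ne_empty.mpr hne
  obtain ⟨y1, hy1I, hy1F, hy1adj⟩ := hc.exists_adj_mem hE hy0.2 hy0.1.1
  obtain ⟨x2, hx2I, hx2F⟩ := Set.not_subset.mp hsub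
  obtain ⟨y2, hy2I, hy2F, hy2adj⟩ := hc.exists_adj_notmem hA hE hx2F hx2I.2
  have hfinN : ∀ q : P, (Set.Ioo α0 α1 ∩ eps ⁻¹' {q}).Finite :=
    fun q => (Set.finite_Ioo α0 α1).subset Set.inter_subset_left
  have hfint : ∀ q : P, (Set.Ioo α0 α1 ∩ F ∩ eps ⁻¹' {q}).Finite :=
    fun q => (Set.finite_Ioo α0 α1).subset fun x hx => hx.1.1
  have htN : ∀ q : P, ((Set.Ioo α0 α1 ∩ F ∩ eps ⁻¹' {q}).ncard : ℤ) ≤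
      ((Set.Ioo α0 α1 ∩ eps ⁻¹' {q}).ncard : ℤ) := by
    intro q
    have := Set.ncard_le_ncard (s := Set.Ioo α0 α1 ∩ F ∩ eps ⁻¹' {q})
      (t := Set.Ioo α0 α1 ∩ eps ⁻¹' {q}) (fun x hx => ⟨hx.1.1, hx.2⟩) (hfinN q)
    exact_mod_cast this
  have hAle : ∀ q, q ≠ p → A p q ≤ 0 := fun q hq => hA.2.1 p q (Ne.symm hq)
  have htp : ((Set.Ioo α0 α1 ∩ F ∩ eps ⁻¹' {p}).ncard : ℤ) = 0 := by
    rw [hc.t_p_zero, Set.ncard_empty]; rfl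
  have hNp : ((Set.Ioo α0 α1 ∩ eps ⁻¹' {p}).ncard : ℤ) = 0 := by
    rw [hc.Ioo_fiber_empty, Set.ncard_empty]; rfl
  have hf : ∀ q : P, 0 ≤ (-(A p q)) * ((Set.Ioo α0 α1 ∩ F ∩ eps ⁻¹' {q}).ncard : ℤ) := by
    intro q
    rcases eq_or_ne q p with rfl | hq
    · rw [htp]; ring_nf; exact le_refl 0
    · exact mul_nonneg (by linarith [hAle q hq]) (by positivity)
  have hg : ∀ q : P, 0 ≤ (-(A p q)) * (((Set.Ioo α0 α1 ∩ eps ⁻¹' {q}).ncard : ℤ) -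
      ((Set.Ioo α0 α1 ∩ F ∩ eps ⁻¹' {q}).ncard : ℤ)) := by
    intro q
    rcases eq_or_ne q p with rfl | hq
    · rw [htp, hNp]; ring_nf; exact le_refl 0
    · exact mul_nonneg (by linarith [hAle q hq]) (by linarith [htN q])
  have hq1 : (1 : ℤ) ≤ (-(A p (eps y1))) *
      ((Set.Ioo α0 α1 ∩ F ∩ eps ⁻¹' {eps y1}).ncard : ℤ) := by
    have h1 : 1 ≤ -(A p (eps y1)) := by
      have h1a := hAle (eps y1) (Ne.symm hy1adj.1)
      have h1b := hy1adj.2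
      omega
    have h2 : (1 : ℤ) ≤ ((Set.Ioo α0 α1 ∩ F ∩ eps ⁻¹' {eps y1}).ncard : ℤ) := by
      have hne' : (Set.Ioo α0 α1 ∩ F ∩ eps ⁻¹' {eps y1}).Nonempty := ⟨y1, ⟨hy1I, hy1F⟩, rfl⟩
      have := (Set.ncard_pos (hfint (eps y1))).mpr hne'
      exact_mod_cast this
    nlinarith
  have hq2 : (1 : ℤ) ≤ (-(A p (eps y2))) *
      (((Set.Ioo α0 α1 ∩ eps ⁻¹' {eps y2}).ncard : ℤ) -
       ((Set.Ioo α0 α1 ∩ F ∩ eps ⁻¹' {eps y2}).ncard : ℤ)) := by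
    have h1 : 1 ≤ -(A p (eps y2)) := by
      have h1a := hAle (eps y2) (Ne.symm hy2adj.1)
      have h1b := hy2adj.2
      omega
    have h2 : ((Set.Ioo α0 α1 ∩ F ∩ eps ⁻¹' {eps y2}).ncard : ℤ) <
        ((Set.Ioo α0 α1 ∩ eps ⁻¹' {eps y2}).ncard : ℤ) := by
      have hss : Set.Ioo α0 α1 ∩ F ∩ eps ⁻¹' {eps y2} ⊂ Set.Ioo α0 α1 ∩ eps ⁻¹' {eps y2} := by
        constructor
        · exact fun x hx => ⟨hx.1.1, hx.2⟩
        · intro hsub'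
          exact hy2F (hsub' ⟨hy2I, rfl⟩).1.2
      exact_mod_cast Set.ncard_lt_ncard hss (hfinN (eps y2))
    nlinarith
  have hsumf : (1 : ℤ) ≤ ∑ q, (-(A p q)) * ((Set.Ioo α0 α1 ∩ F ∩ eps ⁻¹' {q}).ncard : ℤ) :=
    le_trans hq1 (Finset.single_le_sum (fun q _ => hf q) (Finset.mem_univ (eps y1)))
  have hsumg : (1 : ℤ) ≤ ∑ q, (-(A p q)) * (((Set.Ioo α0 α1 ∩ eps ⁻¹' {q}).ncard : ℤ) -
      ((Set.Ioo α0 α1 ∩ F ∩ eps ⁻¹' {q}).ncard : ℤ)) :=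
    le_trans hq2 (Finset.single_le_sum (fun q _ => hg q) (Finset.mem_univ (eps y2)))
  have hsumN : ∑ q, A p q * ((Set.Ioo α0 α1 ∩ eps ⁻¹' {q}).ncard : ℤ) = -2 :=
    hE.interval_sum hc.h0p hc.h1p hc.h01 hc.no_p_between
  have hsplit : (∑ q, (-(A p q)) * ((Set.Ioo α0 α1 ∩ F ∩ eps ⁻¹' {q}).ncard : ℤ)) +
      (∑ q, (-(A p q)) * (((Set.Ioo α0 α1 ∩ eps ⁻¹' {q}).ncard : ℤ) -
        ((Set.Ioo α0 α1 ∩ F ∩ eps ⁻¹' {q}).ncard : ℤ))) =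
      - ∑ q, A p q * ((Set.Ioo α0 α1 ∩ eps ⁻¹' {q}).ncard : ℤ) := by
    rw [← Finset.sum_add_distrib, ← Finset.sum_neg_distrib]
    exact Finset.sum_congr rfl fun q _ => by ring
  have hTf : ∑ q, A p q * ((Set.Ioo α0 α1 ∩ F ∩ eps ⁻¹' {q}).ncard : ℤ) =
      - ∑ q, (-(A p q)) * ((Set.Ioo α0 α1 ∩ F ∩ eps ⁻¹' {q}).ncard : ℤ) := by
    rw [← Finset.sum_neg_distrib]
    exact Finset.sum_congr rfl fun q _ => by ring
  rw [hTf]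
  have hend : ∑ q, (-(A p q)) * ((Set.Ioo α0 α1 ∩ F ∩ eps ⁻¹' {q}).ncard : ℤ) = 1 := by
    rw [hsumN] at hsplit
    linarith
  rw [hend]

end Ctx
end IsFullHeap
end Chunk4
section Chunk5
variable {P E : Type*} [PartialOrder E] [LocallyFiniteOrder E] {A : P → P → ℤ} {eps : E → P}
variable {F F' : Set E} {p : P} {α0 α1 β0 β1 : E}

namespace IsFullHeap

lemma chi_formula_le [Fintype P] [DecidableEq P] (hA : IsGCM A) (hE : IsFullHeap A eps)
    (hc : Ctx A eps F p α0 α1) (hd : Ctx A eps F' p β0 β1) (hle : α0 ≤ β0) :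
    ∑ q, A p q * chiFn eps F F' q =
      (∑ q, A p q * ((Set.Ioo β0 β1 ∩ F' ∩ eps ⁻¹' {q}).ncard : ℤ)) -
      (∑ q, A p q * ((Set.Ioo α0 α1 ∩ F ∩ eps ⁻¹' {q}).ncard : ℤ)) := by
  have hfinIoo : ∀ (a b : E) (S : Set E) (q : P), (Set.Ioo a b ∩ S ∩ eps ⁻¹' {q}).Finite :=
    fun a b S q => (Set.finite_Ioo a b).subset fun x hx => hx.1.1
  rcases eq_or_lt_of_le hle with heq | hlt
  · -- equal case
    subst heq
    have h11 : α1 = β1 :=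
      le_antisymm (hc.hsucc β1 hd.h1p hd.h01) (hd.hsucc α1 hc.h1p hc.h01)
    subst h11
    have hper : ∀ q : P, A p q * chiFn eps F F' q =
        A p q * ((Set.Ioo α0 α1 ∩ F' ∩ eps ⁻¹' {q}).ncard : ℤ) -
        A p q * ((Set.Ioo α0 α1 ∩ F ∩ eps ⁻¹' {q}).ncard : ℤ) := by
      intro q
      rcases eq_or_ne q p with rfl | hq
      · have hP1 : (F' \ F) ∩ eps ⁻¹' {q} = ∅ := by
          ext x
          simp only [Set.mem_inter_iff, Set.mem_diff, Set.mem_preimage, Set.mem_singleton_iff,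
            Set.mem_empty_iff_false, iff_false, not_and]
          rintro ⟨hxF', hxF⟩ hxp
          exact hxF (hc.hF.1 hc.h0F (hd.hmax x hxp hxF'))
        have hP2 : (F \ F') ∩ eps ⁻¹' {q} = ∅ := by
          ext x
          simp only [Set.mem_inter_iff, Set.mem_diff, Set.mem_preimage, Set.mem_singleton_iff,
            Set.mem_empty_iff_false, iff_false, not_and]
          rintro ⟨hxF, hxF'⟩ hxp
          exact hxF' (hd.hF.1 hd.h0F (hc.hmax x hxp hxF))
        simp only [chiFn]
        rw [hP1, hP2, hc.t_p_zero, hd.t_p_zero, Set.ncard_empty]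
        ring
      · by_cases hq0 : A p q = 0
        · rw [hq0]; ring
        · have hadj : Adj A p q := ⟨fun h => hq h.symm, hq0⟩
          have eA : (F' \ F) ∩ eps ⁻¹' {q} =
              (Set.Ioo α0 α1 ∩ F' ∩ eps ⁻¹' {q}) \ (Set.Ioo α0 α1 ∩ F ∩ eps ⁻¹' {q}) := by
            ext x
            constructor
            · rintro ⟨⟨hxF', hxF⟩, hxq⟩
              rcases (hd.fiber_mem_iff hE hadj hxq).mp hxF' with hlt' | ⟨hIoo, _⟩
              · exact absurd (hc.hF.1 hc.h0F hlt'.le) hxF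
              · exact ⟨⟨⟨hIoo, hxF'⟩, hxq⟩, fun hmem => hxF hmem.1.2⟩
            · rintro ⟨⟨⟨hIoo, hxF'⟩, hxq⟩, hnmem⟩
              exact ⟨⟨hxF', fun hxF => hnmem ⟨⟨hIoo, hxF⟩, hxq⟩⟩, hxq⟩
          have eB : (F \ F') ∩ eps ⁻¹' {q} =
              (Set.Ioo α0 α1 ∩ F ∩ eps ⁻¹' {q}) \ (Set.Ioo α0 α1 ∩ F' ∩ eps ⁻¹' {q}) := by
            ext x
            constructor
            · rintro ⟨⟨hxF, hxF'⟩, hxq⟩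
              rcases (hc.fiber_mem_iff hE hadj hxq).mp hxF with hlt' | ⟨hIoo, _⟩
              · exact absurd (hd.hF.1 hd.h0F hlt'.le) hxF'
              · exact ⟨⟨⟨hIoo, hxF⟩, hxq⟩, fun hmem => hxF' hmem.1.2⟩
            · rintro ⟨⟨⟨hIoo, hxF⟩, hxq⟩, hnmem⟩
              exact ⟨⟨hxF, fun hxF' => hnmem ⟨⟨hIoo, hxF'⟩, hxq⟩⟩, hxq⟩
          simp only [chiFn]
          rw [eA, eB, ncard_cast_sub (hfinIoo α0 α1 F' q) (hfinIoo α0 α1 F q)]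
          ring
    rw [Finset.sum_congr rfl (fun q _ => hper q), Finset.sum_sub_distrib]
  · -- strict case
    have h1le : α1 ≤ β0 := hc.hsucc β0 hd.h0p hlt
    have hper : ∀ q : P, A p q * chiFn eps F F' q =
        A p q * ((Set.Ioo α0 β0 ∩ eps ⁻¹' {q}).ncard : ℤ) +
        A p q * ((Set.Ioo β0 β1 ∩ F' ∩ eps ⁻¹' {q}).ncard : ℤ) -
        A p q * ((Set.Ioo α0 α1 ∩ F ∩ eps ⁻¹' {q}).ncard : ℤ) +
        (if q = p then 2 else 0) := by
      intro q
      rcases eq_or_ne q p with rfl | hq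
      · have hB : (F \ F') ∩ eps ⁻¹' {q} = ∅ := by
          ext x
          simp only [Set.mem_inter_iff, Set.mem_diff, Set.mem_preimage, Set.mem_singleton_iff,
            Set.mem_empty_iff_false, iff_false, not_and]
          rintro ⟨hxF, hxF'⟩ hxp
          exact hxF' (hd.hF.1 hd.h0F ((hc.hmax x hxp hxF).trans hlt.le))
        have hA' : (F' \ F) ∩ eps ⁻¹' {q} = Set.Ioc α0 β0 ∩ eps ⁻¹' {q} := by
          ext x
          constructor
          · rintro ⟨⟨hxF', hxF⟩, hxq⟩
            exact ⟨⟨hc.gt_of_notmem hE hxq hxF, hd.hmax x hxq hxF'⟩, hxq⟩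
          · rintro ⟨⟨hx1, hx2⟩, hxq⟩
            refine ⟨⟨hd.hF.1 hd.h0F hx2, fun hxF => ?_⟩, hxq⟩
            exact absurd (hc.hmax x hxq hxF) hx1.not_ge
        have hIoc : Set.Ioc α0 β0 ∩ eps ⁻¹' {q} =
            insert β0 (Set.Ioo α0 β0 ∩ eps ⁻¹' {q}) := by
          ext x
          simp only [Set.mem_inter_iff, Set.mem_Ioc, Set.mem_Ioo, Set.mem_preimage,
            Set.mem_singleton_iff, Set.mem_insert_iff]
          constructor
          · rintro ⟨⟨h1, h2⟩, h3⟩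
            rcases eq_or_lt_of_le h2 with h | h
            · exact Or.inl h
            · exact Or.inr ⟨⟨h1, h⟩, h3⟩
          · rintro (rfl | ⟨⟨h1, h2⟩, h3⟩)
            · exact ⟨⟨hlt, le_refl _⟩, hd.h0p⟩
            · exact ⟨⟨h1, h2.le⟩, h3⟩
        have hnm : β0 ∉ Set.Ioo α0 β0 ∩ eps ⁻¹' {q} := fun h => absurd h.1.2 (lt_irrefl β0)
        have hfin : (Set.Ioo α0 β0 ∩ eps ⁻¹' {q}).Finite :=
          (Set.finite_Ioo α0 β0).subset Set.inter_subset_left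
        simp only [chiFn]
        rw [hA', hB, hIoc, Set.ncard_insert_of_notMem hnm hfin, Set.ncard_empty,
          hc.t_p_zero, hd.t_p_zero, Set.ncard_empty, hA.1]
        simp only [eq_self_iff_true, if_true]
        push_cast
        ring
      · by_cases hq0 : A p q = 0
        · rw [hq0, if_neg hq]; ring
        · have hadj : Adj A p q := ⟨fun h => hq h.symm, hq0⟩
          have hB : (F \ F') ∩ eps ⁻¹' {q} = ∅ := by
            ext x
            simp only [Set.mem_inter_iff, Set.mem_diff, Set.mem_preimage, Set.mem_singleton_iff,
              Set.mem_empty_iff_false, iff_false, not_and]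
            rintro ⟨hxF, hxF'⟩ hxq
            have hxlt : x < β0 := by
              rcases (hc.fiber_mem_iff hE hadj hxq).mp hxF with h | ⟨hIoo, _⟩
              · exact h.trans hlt
              · exact lt_of_lt_of_le hIoo.2 h1le
            exact hxF' (hd.hF.1 hd.h0F hxlt.le)
          have hU : (F' \ F) ∩ eps ⁻¹' {q} =
              ((Set.Ioo α0 β0 ∩ eps ⁻¹' {q}) \ (Set.Ioo α0 α1 ∩ F ∩ eps ⁻¹' {q})) ∪
              (Set.Ioo β0 β1 ∩ F' ∩ eps ⁻¹' {q}) := by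
            ext x
            constructor
            · rintro ⟨⟨hxF', hxF⟩, hxq⟩
              have hα0x : α0 < x := by
                rcases hE.comparable α0 x (Or.inr (by rw [hc.h0p, hxq]; exact hadj)) with h | h
                · exact lt_of_le_of_ne h (fun he => hadj.1 (by rw [← hc.h0p, he]; exact hxq))
                · exact absurd (hc.hF.1 hc.h0F h) hxF
              rcases (hd.fiber_mem_iff hE hadj hxq).mp hxF' with h | ⟨hIoo, _⟩
              · exact Or.inl ⟨⟨⟨hα0x, h⟩, hxq⟩, fun hmem => hxF hmem.1.2⟩
              · exact Or.inr ⟨⟨hIoo, hxF'⟩, hxq⟩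
            · rintro (⟨⟨⟨h1, h2⟩, hxq⟩, hnm⟩ | ⟨⟨hI, hxF'⟩, hxq⟩)
              · refine ⟨⟨hd.hF.1 hd.h0F h2.le, fun hxF => ?_⟩, hxq⟩
                rcases (hc.fiber_mem_iff hE hadj hxq).mp hxF with h | ⟨hIoo, hmF⟩
                · exact absurd h1 h.asymm
                · exact hnm ⟨⟨hIoo, hmF⟩, hxq⟩
              · refine ⟨⟨hxF', fun hxF => ?_⟩, hxq⟩
                rcases (hc.fiber_mem_iff hE hadj hxq).mp hxF with h | ⟨hIoo, _⟩
                · exact absurd (h.trans (hlt.trans hI.1)) (lt_irrefl x)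
                · exact absurd ((hIoo.2.trans_le h1le).trans hI.1) (lt_irrefl x)
          have hdisj : Disjoint ((Set.Ioo α0 β0 ∩ eps ⁻¹' {q}) \
              (Set.Ioo α0 α1 ∩ F ∩ eps ⁻¹' {q})) (Set.Ioo β0 β1 ∩ F' ∩ eps ⁻¹' {q}) := by
            rw [Set.disjoint_left]
            rintro x ⟨⟨⟨_, h2⟩, _⟩, _⟩ ⟨⟨h3, _⟩, _⟩
            exact absurd (h2.trans h3.1) (lt_irrefl x)
          have hsubT : Set.Ioo α0 α1 ∩ F ∩ eps ⁻¹' {q} ⊆ Set.Ioo α0 β0 ∩ eps ⁻¹' {q} :=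
            fun x hx => ⟨⟨hx.1.1.1, hx.1.1.2.trans_le h1le⟩, hx.2⟩
          have hfinM : (Set.Ioo α0 β0 ∩ eps ⁻¹' {q}).Finite :=
            (Set.finite_Ioo α0 β0).subset Set.inter_subset_left
          have hdiffcard := Set.ncard_diff_add_ncard_of_subset hsubT hfinM
          have huncard := Set.ncard_union_eq hdisj (hfinM.subset Set.diff_subset)
            (hfinIoo β0 β1 F' q)
          simp only [chiFn]
          rw [hU, hB, Set.ncard_empty, huncard, if_neg hq]
          push_cast [← hdiffcard]
          ring
    rw [Finset.sum_congr rfl (fun q _ => hper q)]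
    have hsm := mid_sum hA hE (Finset.Ioo α0 β0).card α0 β0 rfl hc.h0p hd.h0p hlt
    rw [Finset.sum_add_distrib, Finset.sum_sub_distrib, Finset.sum_add_distrib,
      Finset.sum_ite_eq' Finset.univ p (fun _ => (2 : ℤ)), if_pos (Finset.mem_univ p), hsm]
    ring

lemma chi_formula [Fintype P] [DecidableEq P] (hA : IsGCM A) (hE : IsFullHeap A eps)
    (hc : Ctx A eps F p α0 α1) (hd : Ctx A eps F' p β0 β1) :
    ∑ q, A p q * chiFn eps F F' q =
      (∑ q, A p q * ((Set.Ioo β0 β1 ∩ F' ∩ eps ⁻¹' {q}).ncard : ℤ)) -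
      (∑ q, A p q * ((Set.Ioo α0 α1 ∩ F ∩ eps ⁻¹' {q}).ncard : ℤ)) := by
  rcases hE.comparable α0 β0 (Or.inl (by rw [hc.h0p, hd.h0p])) with h | h
  · exact chi_formula_le hA hE hc hd h
  · have hswap := chi_formula_le hA hE hd hc h
    have hneg : ∑ q, A p q * chiFn eps F F' q = - ∑ q, A p q * chiFn eps F' F q := by
      rw [← Finset.sum_neg_distrib]
      exact Finset.sum_congr rfl fun q _ => by rw [chi_swap F F' q]; ring
    rw [hneg, hswap]
    ring

end IsFullHeap
end Chunk5
section Chunk6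
variable {P E : Type*} [PartialOrder E] [LocallyFiniteOrder E] {A : P → P → ℤ} {eps : E → P}
variable {F F' : Set E} {p : P} {α0 α1 : E}

namespace IsFullHeap

lemma step1 [Fintype P] [DecidableEq P] (hA : IsGCM A) (hE : IsFullHeap A eps)
    (hc : Ctx A eps F p α0 α1) {G : Set E} (hG : IsProperIdeal eps G) :
    chiFn eps (Sact eps p F) G p = chiFn eps F G p +
      ((∑ q, A p q * ((Set.Ioo α0 α1 ∩ F ∩ eps ⁻¹' {q}).ncard : ℤ)) + 1) := by
  have hfin1 : ((G \ F) ∩ eps ⁻¹' {p}).Finite := diff_fiber_finite hE hG hc.hF p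
  have hfin2 : ((F \ G) ∩ eps ⁻¹' {p}).Finite := diff_fiber_finite hE hc.hF hG p
  by_cases hemp : Set.Ioo α0 α1 ∩ F = ∅
  · rw [hc.sact_remove hE hemp, chi_remove hfin1 hfin2 hc.h0F hc.h0p, hc.tsum_remove hemp]
    ring
  · by_cases hsub : Set.Ioo α0 α1 ⊆ F
    · rw [hc.sact_add hA hE hemp hsub, chi_add hfin1 hfin2 hc.h1F hc.h1p, hc.tsum_add hE hsub]
      ring
    · rw [hc.sact_id hA hE hemp hsub, hc.tsum_id hA hE hemp hsub]
      ring

lemma sact_chi [Fintype P] [DecidableEq P] (hA : IsGCM A) (hE : IsFullHeap A eps) (p : P)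
    (hF : IsProperIdeal eps F) (hF' : IsProperIdeal eps F')
    (hSF : IsProperIdeal eps (Sact eps p F)) (hSF' : IsProperIdeal eps (Sact eps p F')) :
    chiFn eps (Sact eps p F) (Sact eps p F') = reflAct A p (chiFn eps F F') := by
  obtain ⟨α0, α1, hc⟩ := exists_ctx hE hF p
  obtain ⟨β0, β1, hd⟩ := exists_ctx hE hF' p
  funext r
  by_cases hr : r = p
  · subst hr
    have h1 := step1 hA hE hc hF'
    have h2 := step1 hA hE hd hSF
    have h3 := chi_swap (eps := eps) (Sact eps r F) (Sact eps r F') r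
    have h4 := chi_swap (eps := eps) F' (Sact eps r F) r
    have h5 := chi_formula hA hE hc hd
    simp only [reflAct, eq_self_iff_true, if_true]
    linarith
  · simp only [reflAct, if_neg hr]
    have e1 : (Sact eps p F' \ Sact eps p F) ∩ eps ⁻¹' {r} = (F' \ F) ∩ eps ⁻¹' {r} := by
      ext x
      simp only [Set.mem_inter_iff, Set.mem_diff, Set.mem_preimage, Set.mem_singleton_iff]
      constructor
      · rintro ⟨⟨h1, h2⟩, h3⟩
        have hne : eps x ≠ p := by rw [h3]; exact hr
        rw [sact_mem_of_ne hne] at h1 h2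
        exact ⟨⟨h1, h2⟩, h3⟩
      · rintro ⟨⟨h1, h2⟩, h3⟩
        have hne : eps x ≠ p := by rw [h3]; exact hr
        rw [sact_mem_of_ne hne, sact_mem_of_ne hne]
        exact ⟨⟨h1, h2⟩, h3⟩
    have e2 : (Sact eps p F \ Sact eps p F') ∩ eps ⁻¹' {r} = (F \ F') ∩ eps ⁻¹' {r} := by
      ext x
      simp only [Set.mem_inter_iff, Set.mem_diff, Set.mem_preimage, Set.mem_singleton_iff]
      constructor
      · rintro ⟨⟨h1, h2⟩, h3⟩
        have hne : eps x ≠ p := by rw [h3]; exact hr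
        rw [sact_mem_of_ne hne] at h1 h2
        exact ⟨⟨h1, h2⟩, h3⟩
      · rintro ⟨⟨h1, h2⟩, h3⟩
        have hne : eps x ≠ p := by rw [h3]; exact hr
        rw [sact_mem_of_ne hne, sact_mem_of_ne hne]
        exact ⟨⟨h1, h2⟩, h3⟩
    simp only [chiFn]
    rw [e1, e2]

end IsFullHeap
end Chunk6
/-- For an affine `A`, the relation of skewness (the
character being a real root) on pairs of proper ideals is invariant under the
action of the Weyl group. -/
theorem stmt6 {P E : Type*} [Fintype P] [DecidableEq P] [PartialOrder E]
    [LocallyFiniteOrder E] {A : P → P → ℤ} {eps : E → P}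
    (hA : IsGCM A) (haff : IsAffine A) (hE : IsFullHeap A eps)
    (act : WeylGroup A →* Equiv.Perm {I : Set E // IsProperIdeal eps I})
    (hact : ∀ (p : P) (I : {I : Set E // IsProperIdeal eps I}),
      (act (PresentedGroup.of p) I).val = Sact eps p I.val)
    (ρ : WeylGroup A →* Equiv.Perm (P → ℤ))
    (hρ : ∀ (p : P) (v : P → ℤ), ρ (PresentedGroup.of p) v = reflAct A p v) :
    ∀ (w : WeylGroup A) (F F' : {I : Set E // IsProperIdeal eps I}),
      ((∃ (u : WeylGroup A) (p : P), ρ u (Pi.single p 1) = chiFn eps F.val F'.val) ↔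
       (∃ (u : WeylGroup A) (p : P),
          ρ u (Pi.single p 1) = chiFn eps (act w F).val (act w F').val)) := by
  have hgen : ∀ (p : P) (F F' : {I : Set E // IsProperIdeal eps I}),
      chiFn eps (act (PresentedGroup.of p) F).val (act (PresentedGroup.of p) F').val
        = ρ (PresentedGroup.of p) (chiFn eps F.val F'.val) := by
    intro p F F'
    have hSF : IsProperIdeal eps (Sact eps p F.val) := by
      rw [← hact p F]; exact (act (PresentedGroup.of p) F).prop
    have hSF' : IsProperIdeal eps (Sact eps p F'.val) := by
      rw [← hact p F']; exact (act (PresentedGroup.of p) F').prop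
    rw [hact p F, hact p F', hρ p]
    exact IsFullHeap.sact_chi hA hE p F.prop F'.prop hSF hSF'
  have key : ∀ (w : WeylGroup A) (F F' : {I : Set E // IsProperIdeal eps I}),
      chiFn eps (act w F).val (act w F').val = ρ w (chiFn eps F.val F'.val) := by
    intro w
    obtain ⟨g, rfl⟩ := PresentedGroup.mk_surjective (weylRels A) w
    induction g using FreeGroup.induction_on with
    | C1 =>
      intro F F'
      simp only [map_one, Equiv.Perm.coe_one, id_eq]
    | of x =>
      intro F F'
      exact hgen x F F'
    | inv_of x ih =>
      intro F F'
      rw [map_inv]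
      have h1 := ih (act (PresentedGroup.mk (weylRels A) (FreeGroup.of x))⁻¹ F)
        (act (PresentedGroup.mk (weylRels A) (FreeGroup.of x))⁻¹ F')
      have hfix : ∀ G, act (PresentedGroup.mk (weylRels A) (FreeGroup.of x))
          (act (PresentedGroup.mk (weylRels A) (FreeGroup.of x))⁻¹ G) = G := by
        intro G
        rw [← Equiv.Perm.mul_apply, ← map_mul, mul_inv_cancel, map_one, Equiv.Perm.one_apply]
      rw [hfix F, hfix F'] at h1
      rw [h1, ← Equiv.Perm.mul_apply, ← map_mul, inv_mul_cancel, map_one, Equiv.Perm.one_apply]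
    | mul x y ihx ihy =>
      intro F F'
      have e1 : ∀ G, act (PresentedGroup.mk (weylRels A) (x * y)) G
          = act (PresentedGroup.mk (weylRels A) x) (act (PresentedGroup.mk (weylRels A) y) G) := by
        intro G
        rw [map_mul, map_mul, Equiv.Perm.mul_apply]
      rw [e1 F, e1 F', ihx, ihy, map_mul, map_mul, Equiv.Perm.mul_apply]
  intro w F F'
  constructor
  · rintro ⟨u, q, hu⟩
    exact ⟨w * u, q, by rw [map_mul, Equiv.Perm.mul_apply, hu, key w F F']⟩
  · rintro ⟨u, q, hu⟩
    refine ⟨w⁻¹ * u, q, ?_⟩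
    rw [map_mul, Equiv.Perm.mul_apply, hu, key w F F', ← Equiv.Perm.mul_apply, ← map_mul,
      inv_mul_cancel, map_one, Equiv.Perm.one_apply]
end

section
/- Let E be a full heap over A, where P is finite and A is of affine type, and fix t in Z. Then the action of the subgroup W_0 preserves the set B_t of proper ideals of height t, and W_0 acts transitively on B_t: for all F, F' in B_t there exists w in W_0 with w · F = F'. -/
set_option linter.unusedSectionVars false


section AuxStmt8
variable {P E : Type*} [PartialOrder E] [LocallyFiniteOrder E] {A : P → P → ℤ} {eps : E → P}

lemma sact_mem_of_ne (p : P) (I : Set E) {x : E} (hx : eps x ≠ p) :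
    x ∈ Sact eps p I ↔ x ∈ I := by
  unfold Sact
  split_ifs with h1 h2
  · have hs := h1.choose_spec
    simp only [Set.mem_diff, Set.mem_singleton_iff]
    constructor
    · exact fun h => h.1
    · intro hxI
      exact ⟨hxI, fun he => hx (he ▸ hs.2.1)⟩
  · have hs := h2.choose_spec
    simp only [Set.mem_union, Set.mem_singleton_iff]
    constructor
    · rintro (h | h)
      · exact h
      · exact absurd (h ▸ hs.2.1) hx
    · exact Or.inl
  · exact Iff.rfl

lemma removable_unique (hE : IsFullHeap A eps) {I : Set E} {a b : E}
    (haI : a ∈ I) (hra : IsIdeal (I \ {a})) (hbI : b ∈ I) (hrb : IsIdeal (I \ {b}))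
    (hlab : eps a = eps b) : a = b := by
  by_contra hne
  rcases hE.comparable a b (Or.inl hlab) with h | h
  · exact (hra (show b ∈ I \ {a} from ⟨hbI, Ne.symm hne⟩) h).2 rfl
  · exact (hrb (show a ∈ I \ {b} from ⟨haI, hne⟩) h).2 rfl

lemma addable_unique (hE : IsFullHeap A eps) {I : Set E} {a b : E}
    (haI : a ∉ I) (hra : IsIdeal (I ∪ {a})) (hbI : b ∉ I) (hrb : IsIdeal (I ∪ {b}))
    (hlab : eps a = eps b) : a = b := by
  by_contra hne
  rcases hE.comparable a b (Or.inl hlab) with h | h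
  · rcases hrb (show b ∈ I ∪ {b} from Or.inr rfl) h with h' | h'
    · exact haI h'
    · exact hne h'
  · rcases hra (show a ∈ I ∪ {a} from Or.inr rfl) h with h' | h'
    · exact hbI h'
    · exact hne (Set.mem_singleton_iff.mp h').symm

lemma not_removable_of_addable (hE : IsFullHeap A eps) {I : Set E} (hI : IsIdeal I)
    {a b : E} (haI : a ∉ I) (hadd : IsIdeal (I ∪ {a}))
    (hbI : b ∈ I) (hrem : IsIdeal (I \ {b})) (hlab : eps b = eps a) : False := by
  have hba : b < a := by
    rcases hE.comparable b a (Or.inl hlab) with h | h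
    · exact lt_of_le_of_ne h (fun he => haI (he ▸ hbI))
    · exact absurd (hI hbI h) haI
  have hIoo : ∀ c : E, b < c → c < a → False := by
    intro c hbc hca
    have hcI : c ∈ I := by
      rcases hadd (show a ∈ I ∪ {a} from Or.inr rfl) hca.le with h | h
      · exact h
      · exact absurd (Set.mem_singleton_iff.mp h) (ne_of_lt hca)
    exact (hrem (show c ∈ I \ {b} from ⟨hcI, (ne_of_gt hbc)⟩) hbc.le).2 rfl
  have hempty : Finset.Ioo b a = ∅ :=
    Finset.eq_empty_of_forall_notMem fun c hc => by
      rw [Finset.mem_Ioo] at hc; exact hIoo c hc.1 hc.2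
  have hsum := hE.interval b a hba hlab (fun c h1 h2 => (hIoo c h1 h2).elim)
  rw [hempty, Finset.sum_empty] at hsum
  norm_num at hsum

lemma Sact_insert (hE : IsFullHeap A eps) {I : Set E} (hI : IsIdeal I) {a : E}
    (haI : a ∉ I) (hadd : IsIdeal (I ∪ {a})) :
    Sact eps (eps a) I = I ∪ {a} := by
  have hno : ¬ ∃ b, b ∈ I ∧ eps b = eps a ∧ IsIdeal (I \ {b}) := by
    rintro ⟨b, hbI, hlabb, hremb⟩
    exact not_removable_of_addable hE hI haI hadd hbI hremb hlabb
  have hyes : ∃ c, c ∉ I ∧ eps c = eps a ∧ IsIdeal (I ∪ {c}) := ⟨a, haI, rfl, hadd⟩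
  unfold Sact
  rw [dif_neg hno, dif_pos hyes]
  have hc := hyes.choose_spec
  rw [addable_unique hE hc.1 hc.2.2 haI hadd hc.2.1]

lemma Sact_erase (hE : IsFullHeap A eps) {I : Set E} {a : E}
    (haI : a ∈ I) (hrem : IsIdeal (I \ {a})) :
    Sact eps (eps a) I = I \ {a} := by
  have hyes : ∃ b, b ∈ I ∧ eps b = eps a ∧ IsIdeal (I \ {b}) := ⟨a, haI, rfl, hrem⟩
  unfold Sact
  rw [dif_pos hyes]
  have hc := hyes.choose_spec
  rw [removable_unique hE hc.1 hc.2.2 haI hrem hc.2.1]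

lemma diff_finite [Fintype P] (hE : IsFullHeap A eps) {F F' : Set E}
    (hF : IsProperIdeal eps F) (hF' : IsProperIdeal eps F') :
    (F \ F').Finite := by
  have hsub : F \ F' ⊆ ⋃ p : P, (F \ F') ∩ eps ⁻¹' {p} := fun x hx =>
    Set.mem_iUnion.mpr ⟨eps x, hx, rfl⟩
  refine Set.Finite.subset (Set.finite_iUnion fun p => ?_) hsub
  obtain ⟨b, hbl, hbF'⟩ := (hF'.2 p).1
  obtain ⟨c, hcl, hcF⟩ := (hF.2 p).2
  refine Set.Finite.subset (Set.finite_Icc b c) ?_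
  rintro x ⟨⟨hxF, hxF'⟩, hxl⟩
  have hxl' : eps x = p := hxl
  constructor
  · rcases hE.comparable x b (Or.inl (by rw [hxl', hbl])) with h | h
    · exact absurd (hF'.1 hbF' h) hxF'
    · exact h
  · rcases hE.comparable x c (Or.inl (by rw [hxl', hcl])) with h | h
    · exact h
    · exact absurd (hF.1 hxF h) hcF

end AuxStmt8

lemma weyl_gen_sq {P : Type*} (A : P → P → ℤ) (p : P) :
    (PresentedGroup.of p : WeylGroup A) * PresentedGroup.of p = 1 := by
  have hmem : (FreeGroup.of p ^ 2 : FreeGroup P) ∈ Subgroup.normalClosure (weylRels A) :=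
    Subgroup.subset_normalClosure (Or.inl ⟨p, rfl⟩)
  have h1 : PresentedGroup.mk (weylRels A) (FreeGroup.of p ^ 2) = 1 :=
    (QuotientGroup.eq_one_iff _).mpr hmem
  rw [map_pow, pow_two] at h1
  exact h1

/-- For an affine `A` and a fixed vertex `p0` with chain
`eps⁻¹(p0)` enumerated by the order-isomorphism `e0 : ℤ → eps⁻¹(p0)`, the
subgroup `W₀` generated by the `s_p` with `p ≠ p0` preserves the set `B_t` of
proper ideals of height `t` and acts transitively on it.  (The height of `F`
is `t` iff `e0 t ∈ F` and `e0 (t+1) ∉ F`.) -/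
theorem stmt8 {P E : Type*} [Fintype P] [PartialOrder E] [LocallyFiniteOrder E]
    {A : P → P → ℤ} {eps : E → P}
    (hA : IsGCM A) (haff : IsAffine A) (hE : IsFullHeap A eps)
    (p0 : P) (e0 : ℤ → E) (he0mono : StrictMono e0)
    (he0lab : ∀ t : ℤ, eps (e0 t) = p0)
    (he0surj : ∀ a : E, eps a = p0 → ∃ t : ℤ, e0 t = a)
    (act : WeylGroup A →* Equiv.Perm {I : Set E // IsProperIdeal eps I})
    (hact : ∀ (p : P) (I : {I : Set E // IsProperIdeal eps I}),
      (act (PresentedGroup.of p) I).val = Sact eps p I.val)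
    (t : ℤ) :
    (∀ w ∈ Subgroup.closure {w : WeylGroup A | ∃ p : P, p ≠ p0 ∧ w = PresentedGroup.of p},
      ∀ F : {I : Set E // IsProperIdeal eps I},
        (e0 t ∈ F.val ∧ e0 (t + 1) ∉ F.val) →
        (e0 t ∈ (act w F).val ∧ e0 (t + 1) ∉ (act w F).val)) ∧
    (∀ F F' : {I : Set E // IsProperIdeal eps I},
      (e0 t ∈ F.val ∧ e0 (t + 1) ∉ F.val) → (e0 t ∈ F'.val ∧ e0 (t + 1) ∉ F'.val) →
      ∃ w ∈ Subgroup.closure {w : WeylGroup A | ∃ p : P, p ≠ p0 ∧ w = PresentedGroup.of p},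
        act w F = F') := by
  classical
  set S : Set (WeylGroup A) := {w : WeylGroup A | ∃ p : P, p ≠ p0 ∧ w = PresentedGroup.of p}
    with hSdef
  -- generators with p ≠ p0 preserve the height conditions
  have hgen : ∀ p : P, p ≠ p0 → ∀ F : {I : Set E // IsProperIdeal eps I},
      (e0 t ∈ F.val ∧ e0 (t + 1) ∉ F.val) →
      (e0 t ∈ (act (PresentedGroup.of p) F).val ∧
        e0 (t + 1) ∉ (act (PresentedGroup.of p) F).val) := by
    intro p hp F hF
    have h1 : eps (e0 t) ≠ p := by rw [he0lab]; exact fun h => hp h.symm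
    have h2 : eps (e0 (t + 1)) ≠ p := by rw [he0lab]; exact fun h => hp h.symm
    constructor
    · show e0 t ∈ (act (PresentedGroup.of p) F).val
      rw [hact]
      exact (sact_mem_of_ne p F.val h1).mpr hF.1
    · show e0 (t + 1) ∉ (act (PresentedGroup.of p) F).val
      rw [hact]
      exact fun h => hF.2 ((sact_mem_of_ne p F.val h2).mp h)
  -- part 1, as an iff (to handle inverses in the closure induction)
  have part1iff : ∀ w ∈ Subgroup.closure S, ∀ F : {I : Set E // IsProperIdeal eps I},
      ((e0 t ∈ F.val ∧ e0 (t + 1) ∉ F.val) ↔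
        (e0 t ∈ (act w F).val ∧ e0 (t + 1) ∉ (act w F).val)) := by
    intro w hw
    refine Subgroup.closure_induction
      (p := fun g _ => ∀ F : {I : Set E // IsProperIdeal eps I},
        ((e0 t ∈ F.val ∧ e0 (t + 1) ∉ F.val) ↔
          (e0 t ∈ (act g F).val ∧ e0 (t + 1) ∉ (act g F).val)))
      ?_ ?_ ?_ ?_ hw
    · rintro x ⟨p, hp, rfl⟩ F
      constructor
      · exact hgen p hp F
      · intro h
        have h2 := hgen p hp (act (PresentedGroup.of p) F) h
        rwa [← Equiv.Perm.mul_apply, ← map_mul, weyl_gen_sq, map_one,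
          Equiv.Perm.one_apply] at h2
    · intro F
      rw [map_one, Equiv.Perm.one_apply]
    · intro x y hx hy px py F
      rw [map_mul, Equiv.Perm.mul_apply]
      exact (py F).trans (px (act y F))
    · intro x hx px F
      have h2 := px (act x⁻¹ F)
      rwa [← Equiv.Perm.mul_apply, ← map_mul, mul_inv_cancel, map_one,
        Equiv.Perm.one_apply, iff_comm] at h2
  -- the label of any element in the difference of two height-t ideals is not p0
  have hlab_ne : ∀ (X Y : Set E), IsIdeal X → IsIdeal Y → e0 (t + 1) ∉ X → e0 t ∈ Y →
      ∀ a : E, a ∈ X → a ∉ Y → eps a ≠ p0 := by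
    intro X Y hX hY hX1 hY0 a haX haY hlab
    obtain ⟨s, rfl⟩ := he0surj a hlab
    have hst : s ≤ t := by
      by_contra hst
      push_neg at hst
      exact hX1 (hX haX (he0mono.monotone (by omega)))
    exact haY (hY hY0 (he0mono.monotone hst))
  -- transitivity, by induction on the size of the symmetric difference
  have key : ∀ n : ℕ, ∀ F F' : {I : Set E // IsProperIdeal eps I},
      (e0 t ∈ F.val ∧ e0 (t + 1) ∉ F.val) → (e0 t ∈ F'.val ∧ e0 (t + 1) ∉ F'.val) →
      ((F'.val \ F.val) ∪ (F.val \ F'.val)).ncard ≤ n →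
      ∃ w ∈ Subgroup.closure S, act w F = F' := by
    intro n
    induction n with
    | zero =>
      intro F F' hF hF' hcard
      have hfin : ((F'.val \ F.val) ∪ (F.val \ F'.val)).Finite :=
        (diff_finite hE F'.2 F.2).union (diff_finite hE F.2 F'.2)
      have hemp : (F'.val \ F.val) ∪ (F.val \ F'.val) = ∅ := by
        have h0 := Nat.le_zero.mp hcard
        rwa [Set.ncard_eq_zero hfin] at h0
      rcases Set.union_empty_iff.mp hemp with ⟨h1, h2⟩
      have heq : F = F' :=
        Subtype.ext (le_antisymm (Set.diff_eq_empty.mp h2) (Set.diff_eq_empty.mp h1))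
      exact ⟨1, Subgroup.one_mem _, by rw [map_one, Equiv.Perm.one_apply, heq]⟩
    | succ n ih =>
      intro F F' hF hF' hcard
      by_cases hFF : F = F'
      · exact ⟨1, Subgroup.one_mem _, by rw [map_one, Equiv.Perm.one_apply, hFF]⟩
      have hfin1 : (F'.val \ F.val).Finite := diff_finite hE F'.2 F.2
      have hfin2 : (F.val \ F'.val).Finite := diff_finite hE F.2 F'.2
      have hfin : ((F'.val \ F.val) ∪ (F.val \ F'.val)).Finite := hfin1.union hfin2
      by_cases hne : (F'.val \ F.val).Nonempty
      · -- add a minimal element of F' \ F to F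
        obtain ⟨a, ha, hmin⟩ := Set.Finite.exists_minimalFor id _ hfin1 hne
        have hp : eps a ≠ p0 := hlab_ne F'.val F.val F'.2.1 F.2.1 hF'.2 hF.1 a ha.1 ha.2
        have hadd : IsIdeal (F.val ∪ {a}) := by
          rintro x (hx | hx) y hy
          · exact Or.inl (F.2.1 hx hy)
          · have hxa : x = a := hx
            subst hxa
            rcases eq_or_lt_of_le hy with h | h
            · exact Or.inr h
            · have hyF' : y ∈ F'.val := F'.2.1 ha.1 h.le
              by_cases hyF : y ∈ F.val
              · exact Or.inl hyF
              · exact absurd (le_antisymm h.le (hmin ⟨hyF', hyF⟩ h.le)) (ne_of_lt h)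
        set F1 := act (PresentedGroup.of (eps a)) F with hF1
        have hF1val : F1.val = F.val ∪ {a} := by
          rw [hF1, hact]
          exact Sact_insert hE F.2.1 ha.2 hadd
        have hF1t : e0 t ∈ F1.val ∧ e0 (t + 1) ∉ F1.val := hgen (eps a) hp F hF
        have hset : (F'.val \ F1.val) ∪ (F1.val \ F'.val)
            = ((F'.val \ F.val) ∪ (F.val \ F'.val)) \ {a} := by
          rw [hF1val]
          ext x
          by_cases hxa : x = a
          · subst hxa
            simp [ha.1, ha.2]
          · simp only [Set.mem_union, Set.mem_diff, Set.mem_singleton_iff, hxa]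
            tauto
        have hcard' : ((F'.val \ F1.val) ∪ (F1.val \ F'.val)).ncard ≤ n := by
          rw [hset, Set.ncard_diff_singleton_of_mem (Set.mem_union_left _ ha)]
          omega
        obtain ⟨w', hw', hw'eq⟩ := ih F1 F' hF1t hF' hcard'
        refine ⟨w' * PresentedGroup.of (eps a),
          Subgroup.mul_mem _ hw' (Subgroup.subset_closure ⟨eps a, hp, rfl⟩), ?_⟩
        rw [map_mul, Equiv.Perm.mul_apply, ← hF1, hw'eq]
      · -- remove a maximal element of F \ F' from F
        have hne2 : (F.val \ F'.val).Nonempty := by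
          rw [Set.not_nonempty_iff_eq_empty] at hne
          rcases Set.eq_empty_or_nonempty (F.val \ F'.val) with h | h
          · exact absurd (Subtype.ext (le_antisymm (Set.diff_eq_empty.mp h)
              (Set.diff_eq_empty.mp hne))) hFF
          · exact h
        obtain ⟨a, ha, hmax⟩ := Set.Finite.exists_maximalFor id _ hfin2 hne2
        have hp : eps a ≠ p0 := hlab_ne F.val F'.val F.2.1 F'.2.1 hF.2 hF'.1 a ha.1 ha.2
        have hrem : IsIdeal (F.val \ {a}) := by
          rintro x ⟨hxF, hxa⟩ y hy
          refine ⟨F.2.1 hxF hy, fun hya => ?_⟩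
          have hya' : y = a := hya
          have hxne : x ≠ a := hxa
          have hay : a ≤ x := hya' ▸ hy
          have hxF' : x ∉ F'.val := fun hxF' => ha.2 (F'.2.1 hxF' hay)
          exact hxne (le_antisymm (hmax ⟨hxF, hxF'⟩ hay) hay)
        set F1 := act (PresentedGroup.of (eps a)) F with hF1
        have hF1val : F1.val = F.val \ {a} := by
          rw [hF1, hact]
          exact Sact_erase hE ha.1 hrem
        have hF1t : e0 t ∈ F1.val ∧ e0 (t + 1) ∉ F1.val := hgen (eps a) hp F hF
        have hset : (F'.val \ F1.val) ∪ (F1.val \ F'.val)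
            = ((F'.val \ F.val) ∪ (F.val \ F'.val)) \ {a} := by
          rw [hF1val]
          ext x
          by_cases hxa : x = a
          · subst hxa
            simp [ha.1, ha.2]
          · simp only [Set.mem_union, Set.mem_diff, Set.mem_singleton_iff, hxa]
            tauto
        have hcard' : ((F'.val \ F1.val) ∪ (F1.val \ F'.val)).ncard ≤ n := by
          rw [hset, Set.ncard_diff_singleton_of_mem (Set.mem_union_right _ ha)]
          omega
        obtain ⟨w', hw', hw'eq⟩ := ih F1 F' hF1t hF' hcard'
        refine ⟨w' * PresentedGroup.of (eps a),
          Subgroup.mul_mem _ hw' (Subgroup.subset_closure ⟨eps a, hp, rfl⟩), ?_⟩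
        rw [map_mul, Equiv.Perm.mul_apply, ← hF1, hw'eq]
  constructor
  · intro w hw F hF
    exact (part1iff w hw F).mp hF
  · intro F F' hF hF'
    exact key (((F'.val \ F.val) ∪ (F.val \ F'.val)).ncard) F F' hF hF' le_rfl
end
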